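/- Let Π_±(ξ) := Π¹_±(ξ) denote the mass-one projection symbols, and for a sign s ∈ {+1,−1} write Π_s := Π_+ if s = +1 and Π_s := Π_− if s = −1. For every C₀ > 0 there exists C > 0 such that: for all signs s₁, s₂ ∈ {+1,−1}, all integers k₁, k₂ ≥ 0 and l with 1 ≤ l ≤ min(k₁,k₂) + 10, all unit vectors ω₁, ω₂ ∈ ℝ³ with |s₁ω₁ − s₂ω₂| ≤ C₀ 2^{−l}, and all vectors v₁, v₂ ∈ ℂ⁴, one has |⟨Π_{s₁}(2^{k₁}ω₁) v₁, β Π_{s₂}(2^{k₂}ω₂) v₂⟩_{ℂ⁴}| ≤ C 2^{−l} |v₁| |v₂|, where ⟨·,·⟩_{ℂ⁴} is the standard Hermitian inner product on ℂ⁴ and |·| the associated norm. -/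

import Mathlib

noncomputable section

open Matrix Complex

/-- The four Dirac matrices `γ⁰, γ¹, γ², γ³` (in 2×2 block form
`γ⁰ = [[I₂,0],[0,−I₂]]`, `γʲ = [[0,σʲ],[−σʲ,0]]` with the Pauli matrices `σʲ`). -/
def diracGamma : Fin 4 → Matrix (Fin 4) (Fin 4) ℂ :=
  ![!![1, 0, 0, 0; 0, 1, 0, 0; 0, 0, -1, 0; 0, 0, 0, -1],
    !![0, 0, 0, 1; 0, 0, 1, 0; 0, -1, 0, 0; -1, 0, 0, 0],
    !![0, 0, 0, -I; 0, 0, I, 0; 0, I, 0, 0; -I, 0, 0, 0],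
    !![0, 0, 1, 0; 0, 0, 0, -1; -1, 0, 0, 0; 0, 1, 0, 0]]

/-- `β := γ⁰`. -/
def diracBeta : Matrix (Fin 4) (Fin 4) ℂ := diracGamma 0

/-- `αʲ := γ⁰ γʲ` for `j = 1,2,3` (indexed by `j : Fin 3`, so `diracAlpha j = γ⁰ γ^(j+1)`). -/
def diracAlpha (j : Fin 3) : Matrix (Fin 4) (Fin 4) ℂ := diracGamma 0 * diracGamma j.succ

/-- `ξ·α := ξ₁α¹ + ξ₂α² + ξ₃α³` for `ξ ∈ ℝ³`. -/
def xiDotAlpha (ξ : EuclideanSpace ℝ (Fin 3)) : Matrix (Fin 4) (Fin 4) ℂ :=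
  ∑ j : Fin 3, (ξ j : ℂ) • diracAlpha j

/-- The Japanese bracket `⟨ξ⟩_M := √(|ξ|² + M²)`. -/
def jbracket (M : ℝ) (ξ : EuclideanSpace ℝ (Fin 3)) : ℝ :=
  Real.sqrt (‖ξ‖ ^ 2 + M ^ 2)

/-- The projection symbols `Π^M_s(ξ) := ½[I₄ + s ⟨ξ⟩_M^{−1}(ξ·α + Mβ)]` for a sign `s = ±1`. -/
def projSymbol (M s : ℝ) (ξ : EuclideanSpace ℝ (Fin 3)) : Matrix (Fin 4) (Fin 4) ℂ :=
  (2⁻¹ : ℂ) • ((1 : Matrix (Fin 4) (Fin 4) ℂ) +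
    ((s * (jbracket M ξ)⁻¹ : ℝ) : ℂ) • (xiDotAlpha ξ + (M : ℂ) • diracBeta))


/-- The standard Hermitian inner product on `ℂ⁴` (conjugate-linear in the first slot). -/
def hermInner (a b : Fin 4 → ℂ) : ℂ := ∑ i, (starRingEnd ℂ) (a i) * b i

/-- The norm on `ℂ⁴` associated to the standard Hermitian inner product. -/
def hermNorm (a : Fin 4 → ℂ) : ℝ := Real.sqrt (∑ i, ‖a i‖ ^ 2)

set_option maxHeartbeats 2000000

lemma alpha0_eq : diracAlpha 0 = !![0,0,0,1;0,0,1,0;0,1,0,0;1,0,0,0] := by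
  ext i j; fin_cases i <;> fin_cases j <;>
    simp [diracAlpha, diracGamma, Matrix.mul_apply, Fin.sum_univ_four, Matrix.vecHead,
      Matrix.vecTail]

lemma alpha1_eq : diracAlpha 1 = !![0,0,0,-I;0,0,I,0;0,-I,0,0;I,0,0,0] := by
  ext i j; fin_cases i <;> fin_cases j <;>
    simp [diracAlpha, diracGamma, Matrix.mul_apply, Fin.sum_univ_four, Matrix.vecHead,
      Matrix.vecTail]

lemma alpha2_eq : diracAlpha 2 = !![0,0,1,0;0,0,0,-1;1,0,0,0;0,-1,0,0] := by
  ext i j; fin_cases i <;> fin_cases j <;>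
    simp [diracAlpha, diracGamma, Matrix.mul_apply, Fin.sum_univ_four, Matrix.vecHead,
      Matrix.vecTail]

lemma xiDotAlpha_eq (c : EuclideanSpace ℝ (Fin 3)) :
    xiDotAlpha c = !![0,0,(c 2:ℂ), (c 0:ℂ) - (c 1:ℂ)*I;
                      0,0,(c 0:ℂ) + (c 1:ℂ)*I, -(c 2:ℂ);
                      (c 2:ℂ), (c 0:ℂ) - (c 1:ℂ)*I, 0, 0;
                      (c 0:ℂ) + (c 1:ℂ)*I, -(c 2:ℂ), 0, 0] := by
  ext i j
  rw [xiDotAlpha, Fin.sum_univ_three, alpha0_eq, alpha1_eq, alpha2_eq]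
  fin_cases i <;> fin_cases j <;> simp [Matrix.vecHead, Matrix.vecTail] <;> ring

lemma beta_eq : diracBeta = !![1,0,0,0;0,1,0,0;0,0,-1,0;0,0,0,-1] := rfl

lemma beta_mul_beta : diracBeta * diracBeta = 1 := by
  ext i j; fin_cases i <;> fin_cases j <;>
    simp [diracBeta, diracGamma, Matrix.mul_apply, Fin.sum_univ_four, Matrix.vecHead,
      Matrix.vecTail, Matrix.one_apply]

lemma beta_anticomm (c : EuclideanSpace ℝ (Fin 3)) :
    diracBeta * xiDotAlpha c = -(xiDotAlpha c * diracBeta) := by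
  rw [xiDotAlpha_eq, beta_eq]
  ext i j; fin_cases i <;> fin_cases j <;>
    simp [Matrix.mul_apply, Fin.sum_univ_four, Matrix.vecHead, Matrix.vecTail,
      Matrix.neg_apply] <;> ring

lemma xiDotAlpha_sq (c : EuclideanSpace ℝ (Fin 3)) :
    xiDotAlpha c * xiDotAlpha c = ((‖c‖^2 : ℝ) : ℂ) • 1 := by
  have hc : ((‖c‖^2 : ℝ) : ℂ) = (c 0:ℂ)^2 + (c 1:ℂ)^2 + (c 2:ℂ)^2 := by
    have : ‖c‖^2 = ∑ i : Fin 3, (c i)^2 := by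
      rw [EuclideanSpace.norm_eq, Real.sq_sqrt (by positivity)]
      simp [sq_abs]
    rw [this, Fin.sum_univ_three]; push_cast; ring
  rw [xiDotAlpha_eq]
  ext i j; fin_cases i <;> fin_cases j <;>
    simp [Matrix.mul_apply, Fin.sum_univ_four, Matrix.vecHead, Matrix.vecTail,
      Matrix.one_apply, hc] <;> ring_nf <;> simp [Complex.I_sq] <;> ring

lemma xiDotAlpha_smul (r : ℝ) (c : EuclideanSpace ℝ (Fin 3)) :
    xiDotAlpha (r • c) = (r : ℂ) • xiDotAlpha c := by
  simp [xiDotAlpha, Finset.smul_sum, smul_smul, ← Complex.ofReal_mul]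

lemma xiDotAlpha_sub (c d : EuclideanSpace ℝ (Fin 3)) :
    xiDotAlpha (c - d) = xiDotAlpha c - xiDotAlpha d := by
  simp [xiDotAlpha, sub_smul, Finset.sum_sub_distrib, Complex.ofReal_sub]

lemma beta_conjTranspose : diracBetaᴴ = diracBeta := by
  ext i j; fin_cases i <;> fin_cases j <;>
    simp [diracBeta, diracGamma, Matrix.conjTranspose_apply, Matrix.vecHead, Matrix.vecTail]

lemma xiDotAlpha_conjTranspose (c : EuclideanSpace ℝ (Fin 3)) :
    (xiDotAlpha c)ᴴ = xiDotAlpha c := by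
  rw [xiDotAlpha_eq]
  ext i j; fin_cases i <;> fin_cases j <;>
    simp [Matrix.conjTranspose_apply, Matrix.vecHead, Matrix.vecTail] <;> ring

lemma projSymbol_conjTranspose (s : ℝ) (ξ : EuclideanSpace ℝ (Fin 3)) :
    (projSymbol 1 s ξ)ᴴ = projSymbol 1 s ξ := by
  simp [projSymbol, Matrix.conjTranspose_smul, Matrix.conjTranspose_add,
    xiDotAlpha_conjTranspose, beta_conjTranspose, Complex.conj_ofReal, star_inv₀]

attribute [local instance] Matrix.frobeniusSeminormedAddCommGroup
  Matrix.frobeniusNormedAddCommGroup Matrix.frobeniusNormedSpace Matrix.frobeniusIsBoundedSMul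

lemma frob_sqrt (A : Matrix (Fin 4) (Fin 4) ℂ) :
    ‖A‖ = Real.sqrt (∑ i, ∑ j, ‖A i j‖ ^ 2) := by
  rw [Matrix.frobenius_norm_def, Real.sqrt_eq_rpow]
  simp_rw [Real.rpow_two]

lemma hermNorm_nonneg (a : Fin 4 → ℂ) : 0 ≤ hermNorm a := Real.sqrt_nonneg _

lemma hermNorm_eq (a : Fin 4 → ℂ) : hermNorm a = ‖(WithLp.equiv 2 (Fin 4 → ℂ)).symm a‖ := by
  rw [EuclideanSpace.norm_eq, hermNorm]; simp

lemma hermInner_CS (a b : Fin 4 → ℂ) : ‖hermInner a b‖ ≤ hermNorm a * hermNorm b := by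
  have : hermInner a b =
      inner (𝕜 := ℂ) ((WithLp.equiv 2 (Fin 4 → ℂ)).symm a) ((WithLp.equiv 2 (Fin 4 → ℂ)).symm b) := by
    rw [PiLp.inner_apply, hermInner]; simp [RCLike.inner_apply]
    exact Finset.sum_congr rfl fun i _ => mul_comm _ _
  rw [this, hermNorm_eq, hermNorm_eq]
  exact norm_inner_le_norm _ _

lemma hermNorm_mulVec_le (A : Matrix (Fin 4) (Fin 4) ℂ) (v : Fin 4 → ℂ) :
    hermNorm (A.mulVec v) ≤ ‖A‖ * hermNorm v := by
  have h1 : ∀ i, ‖A.mulVec v i‖ ≤ Real.sqrt (∑ j, ‖A i j‖ ^ 2) * hermNorm v := by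
    intro i
    have hcs := hermInner_CS (fun j => star (A i j)) v
    have he : hermInner (fun j => star (A i j)) v = A.mulVec v i := by
      simp [hermInner, Matrix.mulVec, dotProduct]
    have hn : hermNorm (fun j => star (A i j)) = Real.sqrt (∑ j, ‖A i j‖ ^ 2) := by
      simp [hermNorm]
    rwa [he, hn] at hcs
  rw [frob_sqrt]; simp only [hermNorm]
  rw [← Real.sqrt_mul (by positivity)]
  apply Real.sqrt_le_sqrt
  rw [Finset.sum_mul]
  apply Finset.sum_le_sum
  intro i _
  calc ‖A.mulVec v i‖ ^ 2 ≤ (Real.sqrt (∑ j, ‖A i j‖ ^ 2) * hermNorm v) ^ 2 :=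
        pow_le_pow_left₀ (norm_nonneg _) (h1 i) 2
    _ = (∑ j, ‖A i j‖ ^ 2) * hermNorm v ^ 2 := by
        rw [mul_pow, Real.sq_sqrt (by positivity)]
    _ = (∑ j, ‖A i j‖ ^ 2) * (∑ i, ‖v i‖ ^ 2) := by
        rw [hermNorm, Real.sq_sqrt (by positivity)]

lemma hermInner_mulVec (A : Matrix (Fin 4) (Fin 4) ℂ) (x y : Fin 4 → ℂ) :
    hermInner (A.mulVec x) y = hermInner x (Aᴴ.mulVec y) := by
  have h1 : ∀ a b : Fin 4 → ℂ, hermInner a b = dotProduct (star a) b := by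
    intro a b; simp [hermInner, dotProduct, Pi.star_apply]
  rw [h1, h1, Matrix.star_mulVec, ← Matrix.dotProduct_mulVec]

lemma norm_one_le : ‖(1 : Matrix (Fin 4) (Fin 4) ℂ)‖ ≤ 2 := by
  rw [frob_sqrt]
  rw [show ((2:ℝ) = Real.sqrt 4) by rw [show (4:ℝ) = 2^2 by norm_num, Real.sqrt_sq]; norm_num]
  apply Real.sqrt_le_sqrt
  simp [Fin.sum_univ_four, Matrix.one_apply]
  norm_num

lemma norm_beta_le : ‖diracBeta‖ ≤ 2 := by
  rw [frob_sqrt, beta_eq]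
  rw [show ((2:ℝ) = Real.sqrt 4) by rw [show (4:ℝ) = 2^2 by norm_num, Real.sqrt_sq]; norm_num]
  apply Real.sqrt_le_sqrt
  simp [Fin.sum_univ_four, Matrix.vecHead, Matrix.vecTail]
  norm_num

lemma norm_xiDotAlpha_le (c : EuclideanSpace ℝ (Fin 3)) : ‖xiDotAlpha c‖ ≤ 6 * ‖c‖ := by
  have hcoord : ∀ j, |c j| ≤ ‖c‖ := by
    intro j
    rw [EuclideanSpace.norm_eq]
    rw [show |c j| = Real.sqrt ((c j)^2) by rw [Real.sqrt_sq_eq_abs]]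
    apply Real.sqrt_le_sqrt
    have := Finset.single_le_sum (f := fun i => ‖c i‖^2) (fun i _ => by positivity)
      (Finset.mem_univ j)
    simpa [sq_abs] using this
  have hna : ∀ (A : Matrix (Fin 4) (Fin 4) ℂ), (∑ i, ∑ j, ‖A i j‖^2) ≤ 4 → ‖A‖ ≤ 2 := by
    intro A hA
    rw [frob_sqrt]
    rw [show ((2:ℝ) = Real.sqrt 4) by
      rw [show (4:ℝ) = 2^2 by norm_num, Real.sqrt_sq]; norm_num]
    exact Real.sqrt_le_sqrt hA
  have h0 : ‖diracAlpha 0‖ ≤ 2 := by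
    apply hna; rw [alpha0_eq]
    simp [Fin.sum_univ_four, Matrix.vecHead, Matrix.vecTail]
    norm_num
  have h1 : ‖diracAlpha 1‖ ≤ 2 := by
    apply hna; rw [alpha1_eq]
    simp [Fin.sum_univ_four, Matrix.vecHead, Matrix.vecTail]
    norm_num
  have h2 : ‖diracAlpha 2‖ ≤ 2 := by
    apply hna; rw [alpha2_eq]
    simp [Fin.sum_univ_four, Matrix.vecHead, Matrix.vecTail]
    norm_num
  have halpha : ∀ j : Fin 3, ‖diracAlpha j‖ ≤ 2 := by
    intro j
    fin_cases j
    · exact h0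
    · exact h1
    · exact h2
  calc ‖xiDotAlpha c‖ ≤ ∑ j : Fin 3, ‖(c j : ℂ) • diracAlpha j‖ :=
        norm_sum_le _ _
    _ ≤ ∑ j : Fin 3, ‖c‖ * 2 := by
        apply Finset.sum_le_sum
        intro j _
        rw [norm_smul, Complex.norm_real, Real.norm_eq_abs]
        exact mul_le_mul (hcoord j) (halpha j) (norm_nonneg _) (norm_nonneg c)
    _ = 6 * ‖c‖ := by simp [Fin.sum_univ_three]; ring

lemma key_identity (a b : EuclideanSpace ℝ (Fin 3)) (ha : ‖a‖ = 1) :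
    (1 + xiDotAlpha a) * (diracBeta * (1 + xiDotAlpha b))
      = (1 + xiDotAlpha a) * (xiDotAlpha (a - b) * diracBeta) := by
  have h2 : xiDotAlpha a * xiDotAlpha a = 1 := by
    rw [xiDotAlpha_sq, ha]; norm_num
  rw [xiDotAlpha_sub]
  have e1 : diracBeta * (1 + xiDotAlpha b) = diracBeta - xiDotAlpha b * diracBeta := by
    rw [mul_add, mul_one, beta_anticomm b, sub_eq_add_neg]
  rw [e1, sub_mul, mul_sub, mul_sub]
  congr 1
  conv_rhs => rw [← mul_assoc, add_mul, one_mul, h2, add_comm]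
lemma projSymbol_decomp (s : ℝ) (k : ℕ) (ω : EuclideanSpace ℝ (Fin 3)) :
    projSymbol 1 s ((2:ℝ)^k • ω) = (2⁻¹:ℂ) • (1 + xiDotAlpha (s • ω))
      + (2⁻¹ : ℂ) • ( ((s * ((2:ℝ)^k * (jbracket 1 ((2:ℝ)^k • ω))⁻¹ - 1) : ℝ) : ℂ) • xiDotAlpha ω
          + ((s * (jbracket 1 ((2:ℝ)^k • ω))⁻¹ : ℝ) : ℂ) • diracBeta ) := by
  rw [projSymbol, xiDotAlpha_smul, xiDotAlpha_smul]
  push_cast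
  module

lemma jbracket_facts (k : ℕ) (ω : EuclideanSpace ℝ (Fin 3)) (hω : ‖ω‖ = 1) :
    (2:ℝ)^k ≤ jbracket 1 ((2:ℝ)^k • ω) ∧ jbracket 1 ((2:ℝ)^k • ω) ≤ (2:ℝ)^k + 1 := by
  have hξ : ‖(2:ℝ)^k • ω‖ = (2:ℝ)^k := by
    rw [norm_smul, hω, Real.norm_eq_abs, abs_of_pos (by positivity), mul_one]
  rw [jbracket, hξ]
  constructor
  · rw [show ((2:ℝ)^k) = Real.sqrt (((2:ℝ)^k)^2) by rw [Real.sqrt_sq (by positivity)]]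
    apply Real.sqrt_le_sqrt
    nlinarith [Real.sq_sqrt (show (0:ℝ) ≤ ((2:ℝ)^k)^2 by positivity)]
  · rw [show ((2:ℝ)^k + 1) = Real.sqrt (((2:ℝ)^k + 1)^2) by rw [Real.sqrt_sq (by positivity)]]
    apply Real.sqrt_le_sqrt
    nlinarith [pow_pos (show (0:ℝ) < 2 by norm_num) k]

lemma pow_inv_le (k l : ℕ) (hkl : (l:ℤ) ≤ (k:ℤ) + 10) :
    ((2:ℝ)^k)⁻¹ ≤ 2^10 * (2:ℝ)^(-(l:ℤ)) := by
  have h1 : ((2:ℝ)^k)⁻¹ = (2:ℝ)^(-(k:ℤ)) := by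
    rw [_root_.zpow_neg, zpow_natCast]
  have h2 : (2:ℝ)^10 * (2:ℝ)^(-(l:ℤ)) = (2:ℝ)^((10:ℤ) + -(l:ℤ)) := by
    rw [zpow_add₀ (two_ne_zero), zpow_ofNat]
  rw [h1, h2]
  apply zpow_le_zpow_right₀ one_le_two
  omega

lemma E_bound (s : ℝ) (hs : s = 1 ∨ s = -1) (k l : ℕ) (hkl : (l:ℤ) ≤ (k:ℤ) + 10)
    (ω : EuclideanSpace ℝ (Fin 3)) (hω : ‖ω‖ = 1) :
    ‖projSymbol 1 s ((2:ℝ)^k • ω) - (2⁻¹:ℂ) • (1 + xiDotAlpha (s • ω))‖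
      ≤ 2^12 * (2:ℝ)^(-(l:ℤ)) := by
  set J := jbracket 1 ((2:ℝ)^k • ω) with hJdef
  obtain ⟨hJK, hJup⟩ := jbracket_facts k ω hω
  have hK1 : (1:ℝ) ≤ (2:ℝ)^k := one_le_pow₀ one_le_two
  have hJpos : 0 < J := lt_of_lt_of_le (by positivity) hJK
  have hinvK : J⁻¹ ≤ ((2:ℝ)^k)⁻¹ := inv_anti₀ (by positivity) hJK
  have hinv : J⁻¹ ≤ 2^10 * (2:ℝ)^(-(l:ℤ)) := hinvK.trans (pow_inv_le k l hkl)
  have hs_abs : |s| = 1 := by rcases hs with h | h <;> simp [h]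
  have hJJ : J * J⁻¹ = 1 := mul_inv_cancel₀ hJpos.ne'
  have hJinv : (0:ℝ) ≤ J⁻¹ := inv_nonneg.mpr hJpos.le
  have hx : |s * ((2:ℝ)^k * J⁻¹ - 1)| ≤ J⁻¹ := by
    rw [abs_mul, hs_abs, one_mul, abs_le]
    constructor <;> nlinarith [mul_le_mul_of_nonneg_right hJK hJinv, pow_pos (show (0:ℝ) < 2 by norm_num) k]
  have hy : |s * J⁻¹| ≤ J⁻¹ := by
    rw [abs_mul, hs_abs, one_mul, _root_.abs_of_nonneg hJinv]
  rw [projSymbol_decomp s k ω, add_sub_cancel_left]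
  have hE : ‖(2⁻¹ : ℂ) • (((s * ((2:ℝ)^k * J⁻¹ - 1) : ℝ) : ℂ) • xiDotAlpha ω
          + ((s * J⁻¹ : ℝ) : ℂ) • diracBeta)‖
      ≤ 2⁻¹ * (J⁻¹ * (6*1) + J⁻¹ * 2) := by
    rw [norm_smul]
    have h1 : ‖(((s * ((2:ℝ)^k * J⁻¹ - 1) : ℝ) : ℂ) • xiDotAlpha ω)‖ ≤ J⁻¹ * (6*1) := by
      rw [norm_smul, Complex.norm_real, Real.norm_eq_abs]
      have := norm_xiDotAlpha_le ω
      rw [hω] at this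
      exact mul_le_mul hx this (norm_nonneg _) hJinv
    have h2 : ‖(((s * J⁻¹ : ℝ) : ℂ) • diracBeta)‖ ≤ J⁻¹ * 2 := by
      rw [norm_smul, Complex.norm_real, Real.norm_eq_abs]
      exact mul_le_mul hy norm_beta_le (norm_nonneg _) hJinv
    have h3 : ‖(2⁻¹:ℂ)‖ = 2⁻¹ := by norm_num
    rw [h3]
    have := norm_add_le (((s * ((2:ℝ)^k * J⁻¹ - 1) : ℝ) : ℂ) • xiDotAlpha ω)
      (((s * J⁻¹ : ℝ) : ℂ) • diracBeta)
    nlinarith [this]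
  refine hE.trans ?_
  nlinarith [hinv]

lemma Q_bound (c : EuclideanSpace ℝ (Fin 3)) (hc : ‖c‖ = 1) :
    ‖(2⁻¹:ℂ) • ((1 : Matrix (Fin 4) (Fin 4) ℂ) + xiDotAlpha c)‖ ≤ 4 := by
  rw [norm_smul]
  have h3 : ‖(2⁻¹:ℂ)‖ = 2⁻¹ := by norm_num
  rw [h3]
  have h1 : ‖(1 : Matrix (Fin 4) (Fin 4) ℂ) + xiDotAlpha c‖ ≤ 2 + 6 := by
    refine (norm_add_le _ _).trans ?_
    have := norm_xiDotAlpha_le c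
    rw [hc] at this
    linarith [norm_one_le]
  linarith

/-- Null-structure bound for the mass-one projections `Π_s := Π¹_s`: if the unit directions
`ω₁, ω₂` satisfy `|s₁ω₁ − s₂ω₂| ≤ C₀2^{−l}` with `1 ≤ l ≤ min(k₁,k₂)+10`, then
`|⟨Π_{s₁}(2^{k₁}ω₁)v₁, β Π_{s₂}(2^{k₂}ω₂)v₂⟩| ≤ C 2^{−l}|v₁||v₂|`. -/
theorem projSymbol_null_structure_bound (C₀ : ℝ) (hC₀ : 0 < C₀) :
    ∃ C > (0 : ℝ), ∀ s₁ s₂ : ℝ, (s₁ = 1 ∨ s₁ = -1) → (s₂ = 1 ∨ s₂ = -1) →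
      ∀ k₁ k₂ l : ℕ, 1 ≤ l → (l : ℤ) ≤ min k₁ k₂ + 10 →
        ∀ ω₁ ω₂ : EuclideanSpace ℝ (Fin 3), ‖ω₁‖ = 1 → ‖ω₂‖ = 1 →
          ‖s₁ • ω₁ - s₂ • ω₂‖ ≤ C₀ * (2 : ℝ) ^ (-(l : ℤ)) →
          ∀ v₁ v₂ : Fin 4 → ℂ,
            ‖hermInner ((projSymbol 1 s₁ (((2 : ℝ) ^ k₁) • ω₁)).mulVec v₁)
                (diracBeta.mulVec ((projSymbol 1 s₂ (((2 : ℝ) ^ k₂) • ω₂)).mulVec v₂))‖ ≤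
              C * (2 : ℝ) ^ (-(l : ℤ)) * hermNorm v₁ * hermNorm v₂ := by
  refine ⟨24 * C₀ + 2^26, by positivity, ?_⟩
  intro s₁ s₂ hs₁ hs₂ k₁ k₂ l hl1 hl2 ω₁ ω₂ hω₁ hω₂ hclose v₁ v₂
  set t : ℝ := (2:ℝ)^(-(l:ℤ)) with ht_def
  have ht : 0 < t := by positivity
  have htle : t ≤ 2⁻¹ := by
    rw [ht_def, show ((2:ℝ))⁻¹ = (2:ℝ)^(-(1:ℤ)) by norm_num]
    apply zpow_le_zpow_right₀ one_le_two
    omega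
  have hk₁ : (l:ℤ) ≤ (k₁:ℤ) + 10 := by
    have := min_le_left k₁ k₂
    push_cast at hl2 ⊢
    omega
  have hk₂ : (l:ℤ) ≤ (k₂:ℤ) + 10 := by
    have := min_le_right k₁ k₂
    push_cast at hl2 ⊢
    omega
  set a : EuclideanSpace ℝ (Fin 3) := s₁ • ω₁ with ha_def
  set b : EuclideanSpace ℝ (Fin 3) := s₂ • ω₂ with hb_def
  have ha : ‖a‖ = 1 := by
    rw [ha_def, norm_smul, hω₁, Real.norm_eq_abs]
    rcases hs₁ with h | h <;> simp [h]
  have hab : ‖a - b‖ ≤ C₀ * t := hclose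
  set P₁ := projSymbol 1 s₁ (((2:ℝ)^k₁) • ω₁) with hP₁def
  set P₂ := projSymbol 1 s₂ (((2:ℝ)^k₂) • ω₂) with hP₂def
  set Q₁ : Matrix (Fin 4) (Fin 4) ℂ := (2⁻¹:ℂ) • (1 + xiDotAlpha a) with hQ₁def
  set Q₂ : Matrix (Fin 4) (Fin 4) ℂ := (2⁻¹:ℂ) • (1 + xiDotAlpha b) with hQ₂def
  set E₁ := P₁ - Q₁ with hE₁def
  set E₂ := P₂ - Q₂ with hE₂def
  have hE₁ : ‖E₁‖ ≤ 2^12 * t := E_bound s₁ hs₁ k₁ l hk₁ ω₁ hω₁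
  have hE₂ : ‖E₂‖ ≤ 2^12 * t := E_bound s₂ hs₂ k₂ l hk₂ ω₂ hω₂
  have hQ₁ : ‖Q₁‖ ≤ 4 := Q_bound a ha
  have hQ₂ : ‖Q₂‖ ≤ 4 := Q_bound b (by
    rw [hb_def, norm_smul, hω₂, Real.norm_eq_abs]
    rcases hs₂ with h | h <;> simp [h])
  -- main term
  have hmain_eq : Q₁ * (diracBeta * Q₂)
      = (4⁻¹:ℂ) • ((1 + xiDotAlpha a) * (xiDotAlpha (a - b) * diracBeta)) := by
    rw [hQ₁def, hQ₂def, Matrix.mul_smul, Matrix.smul_mul, Matrix.mul_smul, smul_smul,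
      ← key_identity a b ha]
    norm_num
  have hmain : ‖Q₁ * (diracBeta * Q₂)‖ ≤ 24 * (C₀ * t) := by
    rw [hmain_eq, norm_smul]
    have h4 : ‖(4⁻¹:ℂ)‖ = 4⁻¹ := by norm_num
    rw [h4]
    have hA : ‖xiDotAlpha (a - b)‖ ≤ 6 * (C₀ * t) :=
      (norm_xiDotAlpha_le (a-b)).trans (by nlinarith)
    have h1 : ‖xiDotAlpha (a - b) * diracBeta‖ ≤ 6 * (C₀ * t) * 2 :=
      (Matrix.frobenius_norm_mul _ _).trans
        (mul_le_mul hA norm_beta_le (norm_nonneg _) (by positivity))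
    have h8 : ‖(1 : Matrix (Fin 4) (Fin 4) ℂ) + xiDotAlpha a‖ ≤ 8 := by
      refine (norm_add_le _ _).trans ?_
      have := norm_xiDotAlpha_le a
      rw [ha] at this
      linarith [norm_one_le]
    have h2 : ‖(1 + xiDotAlpha a) * (xiDotAlpha (a - b) * diracBeta)‖ ≤ 8 * (6 * (C₀*t) * 2) :=
      (Matrix.frobenius_norm_mul _ _).trans
        (mul_le_mul h8 h1 (norm_nonneg _) (by norm_num))
    nlinarith [h2]
  -- full matrix
  have hsplit : P₁ * (diracBeta * P₂)
      = Q₁ * (diracBeta * Q₂) + Q₁ * (diracBeta * E₂) + E₁ * (diracBeta * Q₂)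
        + E₁ * (diracBeta * E₂) := by
    have h1 : P₁ = Q₁ + E₁ := by rw [hE₁def]; abel
    have h2 : P₂ = Q₂ + E₂ := by rw [hE₂def]; abel
    rw [h1, h2]
    noncomm_ring
  have hbeta_mul : ∀ (X : Matrix (Fin 4) (Fin 4) ℂ) (r : ℝ), ‖X‖ ≤ r →
      ‖diracBeta * X‖ ≤ 2 * r := by
    intro X r hX
    refine (Matrix.frobenius_norm_mul _ _).trans ?_
    exact mul_le_mul norm_beta_le hX (norm_nonneg _) (by norm_num)
  have hM : ‖P₁ * (diracBeta * P₂)‖ ≤ (24 * C₀ + 2^26) * t := by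
    rw [hsplit]
    have b1 : ‖Q₁ * (diracBeta * E₂)‖ ≤ 4 * (2 * (2^12 * t)) :=
      (Matrix.frobenius_norm_mul _ _).trans
        (mul_le_mul hQ₁ (hbeta_mul _ _ hE₂) (norm_nonneg _) (by norm_num))
    have b2 : ‖E₁ * (diracBeta * Q₂)‖ ≤ (2^12 * t) * (2 * 4) :=
      (Matrix.frobenius_norm_mul _ _).trans
        (mul_le_mul hE₁ (hbeta_mul _ _ hQ₂) (norm_nonneg _) (by positivity))
    have b3 : ‖E₁ * (diracBeta * E₂)‖ ≤ (2^12 * t) * (2 * (2^12 * t)) :=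
      (Matrix.frobenius_norm_mul _ _).trans
        (mul_le_mul hE₁ (hbeta_mul _ _ hE₂) (norm_nonneg _) (by positivity))
    have := norm_add_le (Q₁ * (diracBeta * Q₂) + Q₁ * (diracBeta * E₂) + E₁ * (diracBeta * Q₂))
      (E₁ * (diracBeta * E₂))
    have h2 := norm_add_le (Q₁ * (diracBeta * Q₂) + Q₁ * (diracBeta * E₂))
      (E₁ * (diracBeta * Q₂))
    have h3 := norm_add_le (Q₁ * (diracBeta * Q₂)) (Q₁ * (diracBeta * E₂))
    nlinarith [ht.le, htle, hmain]
  -- assemble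
  rw [Matrix.mulVec_mulVec, hermInner_mulVec, Matrix.mulVec_mulVec,
    projSymbol_conjTranspose]
  calc ‖hermInner v₁ ((P₁ * (diracBeta * P₂)).mulVec v₂)‖
      ≤ hermNorm v₁ * hermNorm ((P₁ * (diracBeta * P₂)).mulVec v₂) := hermInner_CS _ _
    _ ≤ hermNorm v₁ * (‖P₁ * (diracBeta * P₂)‖ * hermNorm v₂) :=
        mul_le_mul_of_nonneg_left (hermNorm_mulVec_le _ _) (hermNorm_nonneg v₁)
    _ ≤ hermNorm v₁ * ((24 * C₀ + 2^26) * t * hermNorm v₂) := by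
        apply mul_le_mul_of_nonneg_left _ (hermNorm_nonneg v₁)
        exact mul_le_mul_of_nonneg_right hM (hermNorm_nonneg v₂)
    _ = (24 * C₀ + 2^26) * t * hermNorm v₁ * hermNorm v₂ := by ring
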